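/- Let x, y be distinct norm-one elements of the Zorn vector matrix algebra over F₂ such that none of x + 1, y + 1, x + y has norm 1. Then x² = y² = (xy)² = 1 and xy = yx (i.e., x and y generate a subgroup isomorphic to the Klein four-group V₄). -/
import Mathlib


/-- Zorn vector matrices `[[a, α], [β, b]]` over a field `k`. -/
@[ext]
structure Zorn (k : Type*) where
  a : k
  α : Fin 3 → k
  β : Fin 3 → k
  b : k

namespace Zorn

variable {k : Type*} [Field k]

/-- Dot product on `k³`. -/
def dot (u v : Fin 3 → k) : k := u 0 * v 0 + u 1 * v 1 + u 2 * v 2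

/-- Cross product on `k³`. -/
def cross (u v : Fin 3 → k) : Fin 3 → k :=
  ![u 1 * v 2 - u 2 * v 1, u 2 * v 0 - u 0 * v 2, u 0 * v 1 - u 1 * v 0]

/-- Zorn vector matrix multiplication. -/
instance : Mul (Zorn k) :=
  ⟨fun x y =>
    ⟨x.a * y.a + dot x.α y.β,
     fun i => x.a * y.α i + y.b * x.α i - cross x.β y.β i,
     fun i => y.a * x.β i + x.b * y.β i + cross x.α y.α i,
     dot x.β y.α + x.b * y.b⟩⟩

instance : One (Zorn k) := ⟨⟨1, 0, 0, 1⟩⟩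
instance : Zero (Zorn k) := ⟨⟨0, 0, 0, 0⟩⟩
instance : Add (Zorn k) := ⟨fun x y => ⟨x.a + y.a, x.α + y.α, x.β + y.β, x.b + y.b⟩⟩
instance : Neg (Zorn k) := ⟨fun x => ⟨-x.a, -x.α, -x.β, -x.b⟩⟩
instance : SMul k (Zorn k) := ⟨fun c x => ⟨c * x.a, c • x.α, c • x.β, c * x.b⟩⟩

/-- The norm (determinant) of a Zorn vector matrix. -/
def N (x : Zorn k) : k := x.a * x.b - dot x.α x.β

/-- The bilinear form associated with the norm. -/
def polarN (x y : Zorn k) : k := N (x + y) - N x - N y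



-- component simp lemmas
@[simp] lemma mul_a' (x y : Zorn k) : (x*y).a = x.a*y.a + dot x.α y.β := rfl
@[simp] lemma mul_b' (x y : Zorn k) : (x*y).b = dot x.β y.α + x.b*y.b := rfl
@[simp] lemma mul_α' (x y : Zorn k) (i : Fin 3) :
    (x*y).α i = x.a * y.α i + y.b * x.α i - cross x.β y.β i := rfl
@[simp] lemma mul_β' (x y : Zorn k) (i : Fin 3) :
    (x*y).β i = y.a * x.β i + x.b * y.β i + cross x.α y.α i := rfl
@[simp] lemma add_a' (x y : Zorn k) : (x+y).a = x.a + y.a := rfl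
@[simp] lemma add_b' (x y : Zorn k) : (x+y).b = x.b + y.b := rfl
@[simp] lemma add_α' (x y : Zorn k) (i : Fin 3) : (x+y).α i = x.α i + y.α i := rfl
@[simp] lemma add_β' (x y : Zorn k) (i : Fin 3) : (x+y).β i = x.β i + y.β i := rfl
@[simp] lemma one_a' : (1 : Zorn k).a = 1 := rfl
@[simp] lemma one_b' : (1 : Zorn k).b = 1 := rfl
@[simp] lemma one_α' (i : Fin 3) : (1 : Zorn k).α i = 0 := rfl
@[simp] lemma one_β' (i : Fin 3) : (1 : Zorn k).β i = 0 := rfl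
@[simp] lemma zero_a' : (0 : Zorn k).a = 0 := rfl
@[simp] lemma zero_b' : (0 : Zorn k).b = 0 := rfl
@[simp] lemma zero_α' (i : Fin 3) : (0 : Zorn k).α i = 0 := rfl
@[simp] lemma zero_β' (i : Fin 3) : (0 : Zorn k).β i = 0 := rfl
@[simp] lemma smul_a' (c : k) (x : Zorn k) : (c • x).a = c * x.a := rfl
@[simp] lemma smul_b' (c : k) (x : Zorn k) : (c • x).b = c * x.b := rfl
@[simp] lemma smul_α' (c : k) (x : Zorn k) (i : Fin 3) : (c • x).α i = c * x.α i := rfl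
@[simp] lemma smul_β' (c : k) (x : Zorn k) (i : Fin 3) : (c • x).β i = c * x.β i := rfl

lemma cross0 (u : Fin 3 → k) (i : Fin 3) : cross u u i = 0 := by
  fin_cases i <;> simp [cross] <;> ring

/-- Cayley–Hamilton for Zorn vector matrices. -/
lemma CH (z : Zorn k) : z * z + N z • 1 = (z.a + z.b) • z := by
  ext i
  · simp [N, dot]; ring
  · fin_cases i <;> simp [cross] <;> ring
  · fin_cases i <;> simp [cross] <;> ring
  · simp [N, dot]; ring

/-- The norm is multiplicative. -/
lemma Nmul (x y : Zorn k) : N (x*y) = N x * N y := by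
  simp only [N, dot, mul_a', mul_b', mul_α', mul_β', cross]
  simp [Matrix.cons_val_zero, Matrix.cons_val_one]
  ring

lemma expand (x y : Zorn k) : (x+y)*(x+y) = x*x + (x*y + (y*x + y*y)) := by
  ext i
  · simp [dot]; ring
  · fin_cases i <;> simp [cross] <;> ring
  · fin_cases i <;> simp [cross] <;> ring
  · simp [dot]; ring

section F2

lemma zmod2_two : (2 : ZMod 2) = 0 := rfl

lemma cancel (u v : Zorn (ZMod 2)) (h : u + v = 0) : u = v := by
  have hs : ∀ s t : ZMod 2, s + t = 0 → s = t := by decide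
  ext i
  · exact hs _ _ (congrArg Zorn.a h)
  · exact hs _ _ (congrFun (congrArg Zorn.α h) i)
  · exact hs _ _ (congrFun (congrArg Zorn.β h) i)
  · exact hs _ _ (congrArg Zorn.b h)

lemma sq_eq_one (z : Zorn (ZMod 2)) (h1 : N z = 1) (h2 : z.a + z.b = 0) : z * z = 1 := by
  have h := CH z
  rw [h1, h2] at h
  have e1 : (1 : ZMod 2) • (1 : Zorn (ZMod 2)) = 1 := by ext i <;> simp
  have e0 : (0 : ZMod 2) • z = 0 := by ext i <;> simp
  rw [e1, e0] at h
  exact cancel _ _ h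

end F2

/-- If `x ≠ y` are norm-one elements of the Zorn algebra over `F₂` such that none of
`x + 1`, `y + 1`, `x + y` has norm one, then `x` and `y` generate a Klein four-group. -/
theorem klein_four (x y : Zorn (ZMod 2)) (hx : N x = 1) (hy : N y = 1) (hne : x ≠ y)
    (hx1 : N (x + 1) ≠ 1) (hy1 : N (y + 1) ≠ 1) (hxy : N (x + y) ≠ 1) :
    x * x = 1 ∧ y * y = 1 ∧ (x * y) * (x * y) = 1 ∧ x * y = y * x := by
  have h01 : ∀ t : ZMod 2, t ≠ 1 → t = 0 := by decide
  replace hx1 := h01 _ hx1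
  replace hy1 := h01 _ hy1
  replace hxy := h01 _ hxy
  have hNxy : N (x * y) = 1 := by rw [Nmul, hx, hy]; ring
  simp only [N, dot, add_a', add_b', add_α', add_β', one_a', one_b', one_α', one_β'] at hx hy hx1 hy1 hxy
  have hta : x.a + x.b = 0 := by linear_combination hx1 - hx - zmod2_two
  have htc : y.a + y.b = 0 := by linear_combination hy1 - hy - zmod2_two
  have Gx : x * x = 1 := sq_eq_one x (by simp [N, dot]; linear_combination hx) hta
  have Gy : y * y = 1 := sq_eq_one y (by simp [N, dot]; linear_combination hy) htc
  have hN : N (x + y) = 0 := by simp [N, dot]; linear_combination hxy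
  have ht : (x+y).a + (x+y).b = 0 := by
    simp only [add_a', add_b']; linear_combination hta + htc
  have hz : (x+y) * (x+y) = 0 := by
    have h := CH (x+y)
    rw [hN, ht] at h
    have e0 : (0 : ZMod 2) • (x+y) = 0 := by ext i <;> simp
    have e0' : (0 : ZMod 2) • (1 : Zorn (ZMod 2)) = 0 := by ext i <;> simp
    have eadd : (x+y)*(x+y) + (0 : Zorn (ZMod 2)) = (x+y)*(x+y) := by ext i <;> simp
    rw [e0, e0'] at h
    rw [eadd] at h; exact h
  rw [expand, Gx, Gy] at hz
  have comm : x * y = y * x := by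
    have hs : ∀ s t : ZMod 2, 1 + (s + (t + 1)) = 0 → s = t := by decide
    have hs' : ∀ s t : ZMod 2, 0 + (s + (t + 0)) = 0 → s = t := by decide
    ext i
    · exact hs _ _ (congrArg Zorn.a hz)
    · exact hs' _ _ (congrFun (congrArg Zorn.α hz) i)
    · exact hs' _ _ (congrFun (congrArg Zorn.β hz) i)
    · exact hs _ _ (congrArg Zorn.b hz)
  have htxy : (x*y).a + (x*y).b = 0 := by
    simp only [mul_a', mul_b', dot]
    linear_combination (-1 : ZMod 2)*hxy + hx + hy + (y.a + y.b)*hta + zmod2_two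
  exact ⟨Gx, Gy, sq_eq_one _ hNxy htxy, comm⟩

end Zorn
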